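/- Suppose condition (C) holds, let φ be a character of A, and let Ω ⊆ E_k be an open connected set such that for every a ∈ E_k the intersection Ω ∩ (a + M_φ) is path-connected. Let Φ : Ω → A be locally bounded in Ω and differentiable in the sense of Gâteaux at every point of Ω. Then for all ζ₁, ζ₂ ∈ Ω with ζ₂ − ζ₁ ∈ M_φ one has φ(Φ(ζ₂)) = φ(Φ(ζ₁)). -/

import Mathlib

open Filter Topology

/-- Local boundedness of `Φ` on `Ω`: every point of `Ω` has a neighborhood in `Ω`
on which `Φ` is bounded. -/
def IsLocBoundedOn {A : Type*} [NormedCommRing A] [NormedAlgebra ℂ A]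
    {E : Submodule ℝ A} (Ω : Set E) (Φ : E → A) : Prop :=
  ∀ ζ ∈ Ω, ∃ r > (0 : ℝ), ∃ C : ℝ, ∀ z ∈ Ω, ‖z - ζ‖ < r → ‖Φ z‖ ≤ C

/-- Differentiability in the sense of Gâteaux at `ζ` with Gâteaux derivative `g`:
for every `h ∈ E`, `(Φ(ζ + δ h) - Φ(ζ))/δ → h * g` as the real `δ → 0⁺`. -/
def GateauxDiffAt {A : Type*} [NormedCommRing A] [NormedAlgebra ℂ A]
    {E : Submodule ℝ A} (Φ : E → A) (ζ : E) (g : A) : Prop :=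
  ∀ h : E, Tendsto (fun δ : ℝ => δ⁻¹ • (Φ (ζ + δ • h) - Φ ζ))
    (𝓝[>] (0 : ℝ)) (𝓝 ((h : A) * g))

/-- Differentiability in the sense of Lorch at `ζ` (relative to `Ω`) with
Lorch derivative `L`. -/
def LorchDiffAt {A : Type*} [NormedCommRing A] [NormedAlgebra ℂ A]
    {E : Submodule ℝ A} (Ω : Set E) (Φ : E → A) (ζ : E) (L : A) : Prop :=
  ∀ ε > (0 : ℝ), ∃ δ > (0 : ℝ), ∀ h : E, ‖h‖ < δ → ζ + h ∈ Ω →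
    ‖Φ (ζ + h) - Φ ζ - (h : A) * L‖ ≤ ε * ‖h‖

/-- Condition (C): every character of `A` maps `E` onto all of `ℂ`. -/
def CondC {A : Type*} [NormedCommRing A] [NormedAlgebra ℂ A]
    (E : Submodule ℝ A) : Prop :=
  ∀ φ : A →ₐ[ℂ] ℂ, Function.Surjective fun x : E => φ (x : A)

section AuxLemmas


theorem key_deriv {A : Type*} [NormedCommRing A] [NormedAlgebra ℂ A] [FiniteDimensional ℂ A]
    {E : Submodule ℝ A} (φ : A →ₐ[ℂ] ℂ) {Ω : Set E} {Φ Φ' : E → A}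
    (hG : ∀ ζ ∈ Ω, GateauxDiffAt Φ ζ (Φ' ζ))
    {ζ : E} (hζ : ζ ∈ Ω) {h : E} (hh : φ (h : A) = 0) :
    HasDerivAt (fun t : ℝ => φ (Φ (ζ + t • h))) 0 0 := by
  have hφc : Continuous φ := φ.toLinearMap.continuous_of_finiteDimensional
  set g : ℝ → ℂ := fun t => φ (Φ (ζ + t • h)) with hg
  have hg0 : g 0 = φ (Φ ζ) := by simp [hg]
  have side : ∀ h' : E, φ (h' : A) = 0 →
      Tendsto (fun δ : ℝ => δ⁻¹ • (φ (Φ (ζ + δ • h')) - φ (Φ ζ))) (𝓝[>] (0:ℝ)) (𝓝 0) := by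
    intro h' hh'
    have H := (hφc.tendsto ((h' : A) * Φ' ζ)).comp (hG ζ hζ h')
    have h0 : φ ((h' : A) * Φ' ζ) = 0 := by rw [map_mul, hh', zero_mul]
    rw [h0] at H
    refine H.congr fun δ => ?_
    show φ (δ⁻¹ • (Φ (ζ + δ • h') - Φ ζ)) = _
    rw [AlgHom.map_smul_of_tower, map_sub]
  have right : Tendsto (slope g 0) (𝓝[>] (0:ℝ)) (𝓝 0) := by
    refine (side h hh).congr fun δ => ?_
    simp [slope, hg, vsub_eq_sub]
  have hmap : Tendsto (fun x : ℝ => -x) (𝓝[<] (0:ℝ)) (𝓝[>] (0:ℝ)) := by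
    simpa using (tendsto_neg_nhdsLT (a := (0:ℝ)))
  have hneg := side (-h) (by simp [hh])
  have left : Tendsto (slope g 0) (𝓝[<] (0:ℝ)) (𝓝 0) := by
    have H : Tendsto (fun δ : ℝ => -(δ⁻¹ • (φ (Φ (ζ + δ • (-h))) - φ (Φ ζ))))
        (𝓝[>] (0:ℝ)) (𝓝 0) := by simpa using hneg.neg
    have H2 := H.comp hmap
    refine H2.congr fun δ => ?_
    show -((-δ)⁻¹ • (φ (Φ (ζ + (-δ) • (-h))) - φ (Φ ζ))) = slope g 0 δ
    simp only [slope, hg0, hg, vsub_eq_sub, smul_neg, neg_smul, neg_neg, sub_zero, zero_smul, add_zero,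
      Complex.real_smul, Complex.ofReal_inv, Complex.ofReal_neg]
    ring
  rw [hasDerivAt_iff_tendsto_slope, ← nhdsLT_sup_nhdsGT, tendsto_sup]
  exact ⟨left, right⟩

theorem seg_const {A : Type*} [NormedCommRing A] [NormedAlgebra ℂ A] [FiniteDimensional ℂ A]
    {E : Submodule ℝ A} (φ : A →ₐ[ℂ] ℂ) {Ω : Set E} {Φ Φ' : E → A}
    (hG : ∀ ζ ∈ Ω, GateauxDiffAt Φ ζ (Φ' ζ))
    {p q : E} (hseg : ∀ t : ℝ, t ∈ Set.Icc (0:ℝ) 1 → p + t • (q - p) ∈ Ω)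
    (hpq : φ ((q : A) - (p : A)) = 0) : φ (Φ q) = φ (Φ p) := by
  set h : E := q - p with hdef
  have hh : φ (h : A) = 0 := by simpa [hdef] using hpq
  set f : ℝ → ℂ := fun t => φ (Φ (p + t • h)) with hf
  have hder : ∀ t ∈ Set.Icc (0:ℝ) 1, HasDerivAt f 0 t := by
    intro t ht
    have hmem := hseg t ht
    have K := key_deriv φ hG hmem hh
    have K0 : HasDerivAt (fun s : ℝ => φ (Φ ((p + t • h) + s • h))) 0 (t - t) := by
      simpa using K
    have K2 := K0.comp_sub_const t t
    have heq : (fun s : ℝ => φ (Φ ((p + t • h) + (s - t) • h))) = f := by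
      funext s
      show φ (Φ ((p + t • h) + (s - t) • h)) = φ (Φ (p + s • h))
      congr 2
      rw [add_assoc, ← add_smul, add_sub_cancel]
    rw [heq] at K2
    simpa using K2
  have hcont : ContinuousOn f (Set.Icc 0 1) :=
    fun t ht => ((hder t ht).continuousAt).continuousWithinAt
  have := constant_of_has_deriv_right_zero hcont
    (fun t ht => ((hder t (Set.mem_Icc_of_Ico ht)).hasDerivWithinAt)) 1 (by norm_num)
  simpa [hf, hdef] using this

theorem ball_const {A : Type*} [NormedCommRing A] [NormedAlgebra ℂ A] [FiniteDimensional ℂ A]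
    {E : Submodule ℝ A} (φ : A →ₐ[ℂ] ℂ) {Ω : Set E} {Φ Φ' : E → A}
    (hG : ∀ ζ ∈ Ω, GateauxDiffAt Φ ζ (Φ' ζ))
    {c : E} {r : ℝ} (hball : Metric.ball c r ⊆ Ω)
    {p q : E} (hp : p ∈ Metric.ball c r) (hq : q ∈ Metric.ball c r)
    (hpq : φ ((q : A) - (p : A)) = 0) : φ (Φ q) = φ (Φ p) := by
  refine seg_const φ hG (fun t ht => hball ?_) hpq
  have hc : (1 - t) • p + t • q ∈ Metric.ball c r :=
    (convex_ball c r) hp hq (by linarith [ht.2]) ht.1 (by ring)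
  have : p + t • (q - p) = (1 - t) • p + t • q := by
    rw [smul_sub, sub_smul, one_smul]; abel
  rwa [this]

theorem main_aux {A : Type*} [NormedCommRing A] [NormedAlgebra ℂ A] [FiniteDimensional ℂ A]
    {E : Submodule ℝ A} (φ : A →ₐ[ℂ] ℂ)
    {Ω : Set E} (hΩ : IsOpen Ω)
    (hslice : ∀ a : E,
      ∀ ζ₁ ∈ Ω ∩ ((fun m => a + m) '' {m : E | φ (m : A) = 0}),
      ∀ ζ₂ ∈ Ω ∩ ((fun m => a + m) '' {m : E | φ (m : A) = 0}),
        JoinedIn (Ω ∩ ((fun m => a + m) '' {m : E | φ (m : A) = 0})) ζ₁ ζ₂)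
    {Φ Φ' : E → A}
    (hG : ∀ ζ ∈ Ω, GateauxDiffAt Φ ζ (Φ' ζ)) :
    ∀ ζ₁ ∈ Ω, ∀ ζ₂ ∈ Ω, φ ((ζ₂ : A) - (ζ₁ : A)) = 0 →
      φ (Φ ζ₂) = φ (Φ ζ₁) := by
  intro ζ₁ hζ₁ ζ₂ hζ₂ hdiff
  set S : Set E := Ω ∩ ((fun m => ζ₁ + m) '' {m : E | φ (m : A) = 0}) with hS
  have h1 : ζ₁ ∈ S := ⟨hζ₁, 0, by simp, by simp⟩
  have h2 : ζ₂ ∈ S := ⟨hζ₂, ζ₂ - ζ₁, by simpa using hdiff, by simp⟩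
  obtain ⟨γ, hγ⟩ := hslice ζ₁ ζ₁ h1 ζ₂ h2
  have hφconst : ∀ t, φ ((γ t : E) : A) = φ ((ζ₁ : A)) := by
    intro t
    obtain ⟨m, hm, heq⟩ := (hγ t).2
    rw [← heq]
    simp only [Submodule.coe_add, map_add]
    rw [hm, add_zero]
  have hloc : ∀ t : unitInterval, ∀ᶠ s in 𝓝 t, φ (Φ (γ s)) = φ (Φ (γ t)) := by
    intro t
    obtain ⟨r, hr, hball⟩ := Metric.isOpen_iff.mp hΩ (γ t) (hγ t).1
    have hev : ∀ᶠ s in 𝓝 t, γ s ∈ Metric.ball (γ t) r :=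
      γ.continuous.continuousAt (Metric.ball_mem_nhds _ hr)
    filter_upwards [hev] with s hs
    refine ball_const φ hG hball (Metric.mem_ball_self hr) hs ?_
    rw [map_sub, hφconst s, hφconst t, sub_self]
  set T : Set unitInterval := {t | φ (Φ (γ t)) = φ (Φ (γ 0))} with hT
  have hTopen : IsOpen T := by
    rw [isOpen_iff_mem_nhds]
    intro t ht
    exact (hloc t).mono fun s hs => hs.trans ht
  have hTclosed : IsClosed T := by
    rw [← isOpen_compl_iff, isOpen_iff_mem_nhds]
    intro t ht
    exact (hloc t).mono fun s hs hsT => ht (hs.symm.trans hsT)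
  have hTuniv : T = Set.univ := (IsClopen.eq_univ ⟨hTclosed, hTopen⟩) ⟨0, rfl⟩
  have h1T : (1 : unitInterval) ∈ T := hTuniv ▸ Set.mem_univ _
  have : φ (Φ (γ 1)) = φ (Φ (γ 0)) := h1T
  rwa [γ.source, γ.target] at this

end AuxLemmas

/-- Lemma 2: under condition (C), if all intersections of the open connected set
`Ω` with translates of `M_φ = {ζ ∈ E_k : φ(ζ) = 0}` are path-connected, and `Φ` is
locally bounded and Gâteaux differentiable in `Ω`, then `φ ∘ Φ` is constant along
`M_φ`-directions: `ζ₂ - ζ₁ ∈ M_φ` implies `φ(Φ(ζ₂)) = φ(Φ(ζ₁))`. -/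
theorem gateaux_constant_along_Mphi
    {A : Type*} [NormedCommRing A] [NormedAlgebra ℂ A] [FiniteDimensional ℂ A]
    {k : ℕ} (hk : 2 ≤ k) (e : Fin k → A) (he0 : e ⟨0, by omega⟩ = 1)
    (hli : LinearIndependent ℝ e)
    (hC : CondC (Submodule.span ℝ (Set.range e)))
    (φ : A →ₐ[ℂ] ℂ)
    (Ω : Set (Submodule.span ℝ (Set.range e))) (hΩ : IsOpen Ω)
    (hconn : IsConnected Ω)
    (hslice : ∀ a : Submodule.span ℝ (Set.range e),
      ∀ ζ₁ ∈ Ω ∩ ((fun m => a + m) ''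
        {m : Submodule.span ℝ (Set.range e) | φ (m : A) = 0}),
      ∀ ζ₂ ∈ Ω ∩ ((fun m => a + m) ''
        {m : Submodule.span ℝ (Set.range e) | φ (m : A) = 0}),
        JoinedIn (Ω ∩ ((fun m => a + m) ''
          {m : Submodule.span ℝ (Set.range e) | φ (m : A) = 0})) ζ₁ ζ₂)
    (Φ Φ' : Submodule.span ℝ (Set.range e) → A)
    (hlb : IsLocBoundedOn Ω Φ)
    (hG : ∀ ζ ∈ Ω, GateauxDiffAt Φ ζ (Φ' ζ)) :
    ∀ ζ₁ ∈ Ω, ∀ ζ₂ ∈ Ω, φ ((ζ₂ : A) - (ζ₁ : A)) = 0 →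
      φ (Φ ζ₂) = φ (Φ ζ₁) := by
  exact main_aux φ hΩ hslice hG
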